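/- Let V be a nonzero finite-dimensional real vector space and T : V → V a linear endomorphism. Then T is nilpotent if and only if for every t ∈ ℝ the complex spectrum of the complexification of the exponential exp(tT) is contained in {1} (equivalently, every complex eigenvalue of exp(tT) equals 1 for every t ∈ ℝ). -/

import Mathlib

open NormedSpace Polynomial TensorProduct

/-- exp of a nilpotent element is 1 + nilpotent. -/
lemma aux_exp_sub_one_nilpotent {A : Type*} [NormedRing A] [NormedAlgebra ℝ A] [CompleteSpace A]
    {x : A} (hx : IsNilpotent x) : IsNilpotent (NormedSpace.exp x - 1) := by
  obtain ⟨m, hm⟩ := hx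
  have hexp : NormedSpace.exp x = ∑ n ∈ Finset.range (m + 1), ((n.factorial : ℝ))⁻¹ • x ^ n := by
    rw [NormedSpace.exp_eq_tsum ℝ]
    refine tsum_eq_sum ?_
    intro n hn
    have hmn : m ≤ n := by
      by_contra hc
      exact hn (Finset.mem_range.mpr (by omega))
    rw [pow_eq_zero_of_le hmn hm, smul_zero]
  rw [hexp, Finset.sum_range_succ' _ m]
  simp only [pow_zero, Nat.factorial_zero, Nat.cast_one, inv_one, one_smul]
  rw [add_sub_cancel_right]
  refine Commute.isNilpotent_sum (fun i _ => ?_) (fun i j _ _ => ?_)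
  · exact IsNilpotent.smul
      (⟨m, by rw [← pow_mul]; exact pow_eq_zero_of_le (by nlinarith) hm⟩ :
        IsNilpotent (x ^ (i + 1))) _
  · exact ((Commute.pow_pow_self x (i+1) (j+1)).smul_left _).smul_right _

set_option synthInstance.maxHeartbeats 1000000 in
set_option maxHeartbeats 2000000 in
/-- A linear endomorphism `T` of a nonzero finite-dimensional real vector space is
nilpotent if and only if, for every `t ∈ ℝ`, the complex spectrum of the
complexification of `exp (t • T)` is contained in `{1}`. -/
theorem stmt12 (V : Type*) [NormedAddCommGroup V] [NormedSpace ℝ V]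
    [FiniteDimensional ℝ V] [Nontrivial V] (T : V →L[ℝ] V) :
    IsNilpotent T ↔
      ∀ t : ℝ, spectrum ℂ
        (LinearMap.baseChange ℂ ((NormedSpace.exp (t • T)).toLinearMap)) ⊆ {1} := by
  constructor
  · intro hT t
    obtain ⟨m, hm⟩ := hT
    have htT : IsNilpotent (t • T) := ⟨m, by rw [_root_.smul_pow, hm, smul_zero]⟩
    have hN : IsNilpotent ((NormedSpace.exp (t • T) - 1 : V →L[ℝ] V)) :=
      aux_exp_sub_one_nilpotent htT
    have hN' : IsNilpotent
        (LinearMap.baseChange ℂ ((NormedSpace.exp (t • T) - 1 : V →L[ℝ] V) : V →ₗ[ℝ] V)) := by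
      obtain ⟨k, hk⟩ := hN
      refine ⟨k, ?_⟩
      have hcp : (((NormedSpace.exp (t • T) - 1 : V →L[ℝ] V) ^ k : V →L[ℝ] V) : V →ₗ[ℝ] V)
          = ((NormedSpace.exp (t • T) - 1 : V →L[ℝ] V) : V →ₗ[ℝ] V) ^ k :=
        map_pow (ContinuousLinearMap.toLinearMapRingHom) _ _
      rw [← LinearMap.baseChange_pow, ← hcp, hk]
      simp
    have hsplit : LinearMap.baseChange ℂ ((NormedSpace.exp (t • T)).toLinearMap) =
        1 + LinearMap.baseChange ℂ ((NormedSpace.exp (t • T) - 1 : V →L[ℝ] V) : V →ₗ[ℝ] V) := by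
      have h0 : ((NormedSpace.exp (t • T)).toLinearMap : V →ₗ[ℝ] V) =
          (1 : V →ₗ[ℝ] V) + ((NormedSpace.exp (t • T) - 1 : V →L[ℝ] V) : V →ₗ[ℝ] V) := by
        have ho : ((1 : V →L[ℝ] V) : V →ₗ[ℝ] V) = 1 := rfl
        rw [ContinuousLinearMap.coe_sub, ho]
        abel
      rw [h0, LinearMap.baseChange_add, LinearMap.baseChange_one]
    intro lam hlam
    simp only [Set.mem_singleton_iff]
    by_contra hne
    apply spectrum.notMem_iff.mpr ?_ hlam
    rw [hsplit]
    have heq : (algebraMap ℂ (Module.End ℂ (ℂ ⊗[ℝ] V))) lam -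
        (1 + LinearMap.baseChange ℂ ((NormedSpace.exp (t • T) - 1 : V →L[ℝ] V) : V →ₗ[ℝ] V)) =
        (-(LinearMap.baseChange ℂ ((NormedSpace.exp (t • T) - 1 : V →L[ℝ] V) : V →ₗ[ℝ] V))) +
        (algebraMap ℂ (Module.End ℂ (ℂ ⊗[ℝ] V))) (lam - 1) := by
      rw [map_sub, map_one]; abel
    rw [heq]
    refine IsNilpotent.isUnit_add_right_of_commute hN'.neg ?_ ?_
    · exact (isUnit_iff_ne_zero.mpr (sub_ne_zero.mpr hne)).map
        (algebraMap ℂ (Module.End ℂ (ℂ ⊗[ℝ] V)))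
    · exact (Algebra.commute_algebraMap_right _ _)
  · intro h
    have key : ∀ μ : ℂ,
        Module.End.HasEigenvalue (LinearMap.baseChange ℂ (T.toLinearMap)) μ → μ = 0 := by
      intro μ hμ
      obtain ⟨v, hv⟩ := hμ.exists_hasEigenvector
      have hexp1 : ∀ t : ℝ, Complex.exp ((t : ℂ) * μ) = 1 := by
        intro t
        have main : (LinearMap.baseChange ℂ ((NormedSpace.exp (t • T)).toLinearMap)) v
            = Complex.exp ((t : ℂ) * μ) • v := by
          classical
          set n := Module.finrank ℂ (ℂ ⊗[ℝ] V) with hn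
          let e : (ℂ ⊗[ℝ] V) ≃ₗ[ℂ] (Fin n → ℂ) := (Module.finBasis ℂ (ℂ ⊗[ℝ] V)).equivFun
          let Φ : (V →L[ℝ] V) →ₗ[ℝ] (Fin n → ℂ) :=
            { toFun := fun f => e ((LinearMap.baseChange ℂ (f : V →ₗ[ℝ] V)) v)
              map_add' := fun f g => by
                simp [ContinuousLinearMap.coe_add, LinearMap.baseChange_add]
              map_smul' := fun c f => by
                simp only [ContinuousLinearMap.coe_smul, LinearMap.baseChange_smul,
                  LinearMap.smul_apply, RingHom.id_apply]
                exact e.toLinearMap.map_smul_of_tower c _ }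
          have hΦ : Continuous Φ := Φ.continuous_of_finiteDimensional
          let L : (V →L[ℝ] V) →L[ℝ] (Fin n → ℂ) := ⟨Φ, hΦ⟩
          have hsum := NormedSpace.expSeries_summable' (𝕂 := ℝ) (t • T)
          have h1 : L (NormedSpace.exp (t • T)) =
              ∑' k : ℕ, L (((k.factorial : ℝ))⁻¹ • (t • T) ^ k) := by
            rw [NormedSpace.exp_eq_tsum ℝ]
            exact L.map_tsum hsum
          have hb : (LinearMap.baseChange ℂ ((t • T : V →L[ℝ] V) : V →ₗ[ℝ] V)) v
              = ((t : ℂ) * μ) • v := by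
            rw [ContinuousLinearMap.coe_smul, LinearMap.baseChange_smul]
            rw [LinearMap.smul_apply, Module.End.mem_eigenspace_iff.mp hv.1]
            rw [← algebraMap_smul ℂ t (μ • v), smul_smul]
            norm_num [Complex.coe_algebraMap]
          have hB : ∀ k : ℕ, ((LinearMap.baseChange ℂ ((t • T : V →L[ℝ] V) : V →ₗ[ℝ] V)) ^ k) v
              = ((t : ℂ) * μ) ^ k • v := by
            intro k
            induction k with
            | zero => simp
            | succ k ih =>
              rw [pow_succ', Module.End.mul_apply, ih, map_smul, hb, smul_smul, ← pow_succ]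
          have h2 : ∀ k : ℕ, L (((k.factorial : ℝ))⁻¹ • (t • T) ^ k)
              = (((t : ℂ) * μ) ^ k / (k.factorial : ℂ)) • e v := by
            intro k
            rw [map_smul]
            have hcoe : (((t • T) ^ k : V →L[ℝ] V) : V →ₗ[ℝ] V)
                = (((t • T : V →L[ℝ] V) : V →ₗ[ℝ] V)) ^ k :=
              map_pow (ContinuousLinearMap.toLinearMapRingHom) _ _
            have hL : L ((t • T) ^ k) = ((t : ℂ) * μ) ^ k • e v := by
              show e ((LinearMap.baseChange ℂ (((t • T) ^ k : V →L[ℝ] V) : V →ₗ[ℝ] V)) v) = _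
              rw [hcoe, LinearMap.baseChange_pow, hB k, map_smul]
            rw [hL, ← algebraMap_smul ℂ ((k.factorial : ℝ))⁻¹, smul_smul]
            congr 1
            rw [Complex.coe_algebraMap]
            push_cast
            ring
          have h3 : L (NormedSpace.exp (t • T)) = Complex.exp ((t : ℂ) * μ) • e v := by
            rw [h1]
            simp_rw [h2]
            rw [(NormedSpace.expSeries_div_summable ((t:ℂ)*μ)).tsum_smul_const]
            congr 1
            rw [Complex.exp_eq_exp_ℂ, NormedSpace.exp_eq_tsum_div]
          apply e.injective
          rw [map_smul]
          exact h3
        have hEV : Module.End.HasEigenvalue (LinearMap.baseChange ℂ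
            ((NormedSpace.exp (t • T)).toLinearMap)) (Complex.exp ((t:ℂ) * μ)) :=
          Module.End.hasEigenvalue_of_hasEigenvector
            ⟨Module.End.mem_eigenspace_iff.mpr main, hv.2⟩
        exact h t hEV.mem_spectrum
      -- conclude μ = 0
      by_contra hμ0
      obtain ⟨k, hk⟩ := Complex.exp_eq_one_iff.mp (hexp1 (Real.pi / ‖μ‖))
      have habs := congrArg (‖·‖) hk
      have hμa : ‖μ‖ ≠ 0 := by simpa using hμ0
      rw [norm_mul, Complex.norm_real, norm_mul, norm_mul, norm_mul] at habs
      simp only [Complex.norm_intCast, Complex.norm_real, Real.norm_eq_abs, Complex.norm_two, Complex.norm_I,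
        mul_one] at habs
      rw [abs_of_pos (div_pos Real.pi_pos (lt_of_le_of_ne (norm_nonneg μ) (Ne.symm hμa))),
        div_mul_cancel₀ _ hμa, abs_of_pos Real.pi_pos] at habs
      rcases eq_or_ne k 0 with rfl | hk0
      · simp at habs
      · have h1k : (1 : ℝ) ≤ |(k : ℝ)| := by
          rw [← Int.cast_abs]
          exact_mod_cast Int.one_le_abs hk0
        nlinarith [Real.pi_pos]
    -- now: base change of T is nilpotent
    have hA : IsNilpotent (LinearMap.baseChange ℂ (T.toLinearMap)) := by
      set A := LinearMap.baseChange ℂ (T.toLinearMap) with hAdef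
      have hint : IsIntegral ℂ A := Algebra.IsIntegral.isIntegral A
      have hmon := minpoly.monic hint
      have hsp := IsAlgClosed.splits (minpoly ℂ A)
      have heq := hsp.eq_prod_roots_of_monic hmon
      have hroots : ∀ r ∈ (minpoly ℂ A).roots, r = 0 := fun r hr =>
        key r (Module.End.hasEigenvalue_iff_isRoot.mpr (Polynomial.isRoot_of_mem_roots hr))
      have hX : minpoly ℂ A = X ^ Multiset.card (minpoly ℂ A).roots := by
        have hrep : Multiset.map (fun a => X - C a) (minpoly ℂ A).roots
            = Multiset.replicate (Multiset.card (minpoly ℂ A).roots) X := by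
          refine Multiset.eq_replicate.mpr ⟨Multiset.card_map _ _, ?_⟩
          intro b hb
          obtain ⟨r, hr, rfl⟩ := Multiset.mem_map.mp hb
          rw [hroots r hr, map_zero, sub_zero]
        conv_lhs => rw [heq]
        rw [hrep, Multiset.prod_replicate]
      refine ⟨Multiset.card (minpoly ℂ A).roots, ?_⟩
      have haev := minpoly.aeval ℂ A
      rw [hX] at haev
      simpa using haev
    -- transfer nilpotency back to T
    have hchar : (T.toLinearMap).charpoly.map (algebraMap ℝ ℂ)
        = (X : ℂ[X]) ^ Module.finrank ℝ V := by
      rw [← LinearMap.charpoly_baseChange, (LinearMap.isNilpotent_iff_charpoly _).mp hA,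
        Module.finrank_baseChange]
    have hcharT : (T.toLinearMap).charpoly = X ^ Module.finrank ℝ V := by
      apply Polynomial.map_injective (algebraMap ℝ ℂ) (algebraMap ℝ ℂ).injective
      rw [hchar, Polynomial.map_pow, Polynomial.map_X]
    obtain ⟨p, hp⟩ := (LinearMap.isNilpotent_iff_charpoly (T.toLinearMap)).mpr hcharT
    refine ⟨p, ContinuousLinearMap.coe_injective ?_⟩
    have hcp : ((T ^ p : V →L[ℝ] V) : V →ₗ[ℝ] V) = ((T : V →ₗ[ℝ] V)) ^ p :=
      map_pow (ContinuousLinearMap.toLinearMapRingHom) _ _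
    rw [hcp, hp]
    rfl
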